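/- Let g : ℝ → ℝⁿ and F : ℝ → ℝ^{n×n} be differentiable at t₀, suppose F(t₀) is symmetric positive definite, let H be a real symmetric n×n matrix with g'(t₀) = −H F(t₀)⁻¹ g(t₀), and suppose the Loewner inequality 2H + F'(t₀) ⪯ 2F(t₀) holds (i.e. 2F(t₀) − 2H − F'(t₀) is positive semidefinite). Define η(t) = g(t)ᵀ F(t)⁻¹ g(t) near t₀. Then η'(t₀) ≥ −2 η(t₀). -/

import Mathlib

open Matrix

attribute [local instance] Matrix.normedAddCommGroup Matrix.normedSpace


lemma diffAt_det {m : ℕ} {M : ℝ → Matrix (Fin m) (Fin m) ℝ} {t₀ : ℝ}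
    (h : ∀ i j, DifferentiableAt ℝ (fun t => M t i j) t₀) :
    DifferentiableAt ℝ (fun t => (M t).det) t₀ := by
  simp only [Matrix.det_apply']
  exact DifferentiableAt.fun_sum fun σ _ =>
    DifferentiableAt.const_mul (DifferentiableAt.fun_finsetProd fun i _ => h (σ i) i) _

lemma sym_shift {m : ℕ} {M : Matrix (Fin m) (Fin m) ℝ} (hM : Mᵀ = M)
    (x y : Fin m → ℝ) : x ⬝ᵥ M *ᵥ y = (M *ᵥ x) ⬝ᵥ y := by
  rw [Matrix.dotProduct_mulVec, ← Matrix.mulVec_transpose, hM]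

/-- If along a natural-gradient trajectory `ġ(t₀) = −H F(t₀)⁻¹ g(t₀)` with `H` symmetric,
`F(t₀)` symmetric positive definite, `F` differentiable at `t₀` with derivative `F'`, and
the Loewner inequality `2H + F'(t₀) ⪯ 2F(t₀)` holds, then the natural expansion score
`η(t) = g(t)ᵀ F(t)⁻¹ g(t)` satisfies `η'(t₀) ≥ −2 η(t₀)`. -/
theorem eta_decay_rate_bound {n : ℕ}
    (g : ℝ → (Fin n → ℝ)) (F : ℝ → Matrix (Fin n) (Fin n) ℝ)
    (t₀ : ℝ) (F' : Matrix (Fin n) (Fin n) ℝ)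
    (H : Matrix (Fin n) (Fin n) ℝ) (hH : H.IsSymm)
    (hF₀ : (F t₀).PosDef)
    (hg : HasDerivAt g (-((H * (F t₀)⁻¹) *ᵥ g t₀)) t₀)
    (hF : HasDerivAt F F' t₀)
    (hLoewner : ((2 : ℝ) • F t₀ - (2 : ℝ) • H - F').PosSemidef) :
    -2 * (g t₀ ⬝ᵥ (F t₀)⁻¹ *ᵥ g t₀) ≤
      deriv (fun t => g t ⬝ᵥ (F t)⁻¹ *ᵥ g t) t₀ := by
  set A := (F t₀)⁻¹ with hA
  set g₀ := g t₀ with hg₀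
  set gd := -((H * A) *ᵥ g₀) with hgd
  have hdet0 : (F t₀).det ≠ 0 := hF₀.det_pos.ne'
  have hunit : IsUnit (F t₀).det := hdet0.isUnit
  -- entrywise derivatives
  have hFij : ∀ i j, HasDerivAt (fun t => F t i j) (F' i j) t₀ :=
    fun i j => hasDerivAt_pi.mp (hasDerivAt_pi.mp hF i) j
  have hgi : ∀ i, HasDerivAt (fun t => g t i) (gd i) t₀ := fun i => hasDerivAt_pi.mp hg i
  -- differentiability of inverse entries
  have hdiffG : ∀ i j, DifferentiableAt ℝ (fun t => (F t)⁻¹ i j) t₀ := by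
    intro i j
    have hdet : DifferentiableAt ℝ (fun t => (F t).det) t₀ :=
      diffAt_det fun i j => (hFij i j).differentiableAt
    have hadj : DifferentiableAt ℝ (fun t => (F t).adjugate i j) t₀ := by
      simp only [Matrix.adjugate_apply]
      exact diffAt_det (fun k l => by
        by_cases hk : k = j <;>
          simp only [Matrix.updateRow_apply, hk, if_true, if_false]
        · exact differentiableAt_const _
        · exact (hFij k l).differentiableAt)
    have : (fun t => (F t)⁻¹ i j) = fun t => ((F t).det)⁻¹ * (F t).adjugate i j := by
      funext t
      rw [Matrix.inv_def, Matrix.smul_apply, Ring.inverse_eq_inv, smul_eq_mul]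
    rw [this]
    exact (hdet.inv hdet0).mul hadj
  set Gd : Matrix (Fin n) (Fin n) ℝ :=
    Matrix.of (fun i j => deriv (fun t => (F t)⁻¹ i j) t₀) with hGdDef
  have hGd : ∀ i j, HasDerivAt (fun t => (F t)⁻¹ i j) (Gd i j) t₀ :=
    fun i j => (hdiffG i j).hasDerivAt
  -- identify Gd
  have hev : ∀ᶠ t in nhds t₀, (F t).det ≠ 0 := by
    have hc : ContinuousAt (fun t => (F t).det) t₀ :=
      (diffAt_det fun i j => (hFij i j).differentiableAt).continuousAt
    exact hc.eventually_ne hdet0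
  have hkey : ∀ i j, (∑ k, (F' i k * A k j + F t₀ i k * Gd k j)) = 0 := by
    intro i j
    have hsum : HasDerivAt (fun t => ∑ k, F t i k * (F t)⁻¹ k j)
        (∑ k, (F' i k * A k j + F t₀ i k * Gd k j)) t₀ :=
      HasDerivAt.fun_sum fun k _ => (hFij i k).mul (hGd k j)
    have heq : (fun t => (1 : Matrix (Fin n) (Fin n) ℝ) i j) =ᶠ[nhds t₀]
        (fun t => ∑ k, F t i k * (F t)⁻¹ k j) := by
      filter_upwards [hev] with t ht
      rw [← Matrix.mul_apply, Matrix.mul_nonsing_inv _ ht.isUnit]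
    have h0 : HasDerivAt (fun t => (1 : Matrix (Fin n) (Fin n) ℝ) i j)
        (∑ k, (F' i k * A k j + F t₀ i k * Gd k j)) t₀ :=
      hsum.congr_of_eventuallyEq heq
    exact ((hasDerivAt_const t₀ _).unique h0).symm
  have hmat : F' * A + F t₀ * Gd = 0 := by
    ext i j
    simpa [Matrix.mul_apply, Finset.sum_add_distrib] using hkey i j
  have hGdEq : Gd = -(A * (F' * A)) := by
    have h1 : F t₀ * Gd = -(F' * A) := by
      rw [eq_neg_iff_add_eq_zero, add_comm]; exact hmat
    calc Gd = (A * F t₀) * Gd := by rw [Matrix.nonsing_inv_mul _ hunit, Matrix.one_mul]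
    _ = A * (F t₀ * Gd) := by rw [Matrix.mul_assoc]
    _ = -(A * (F' * A)) := by rw [h1, Matrix.mul_neg]
  -- derivative of eta
  have hηsum : HasDerivAt (fun t => ∑ i, ∑ j, g t i * ((F t)⁻¹ i j * g t j))
      (∑ i, ∑ j, (gd i * (A i j * g₀ j) + g₀ i * (Gd i j * g₀ j + A i j * gd j))) t₀ :=
    HasDerivAt.fun_sum fun i _ => HasDerivAt.fun_sum fun j _ =>
      (hgi i).mul ((hGd i j).mul (hgi j))
  have hfun : (fun t => g t ⬝ᵥ (F t)⁻¹ *ᵥ g t)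
      = fun t => ∑ i, ∑ j, g t i * ((F t)⁻¹ i j * g t j) := by
    funext t
    simp [dotProduct, Matrix.mulVec, Finset.mul_sum]
  have hη : HasDerivAt (fun t => g t ⬝ᵥ (F t)⁻¹ *ᵥ g t)
      (∑ i, ∑ j, (gd i * (A i j * g₀ j) + g₀ i * (Gd i j * g₀ j + A i j * gd j))) t₀ := by
    rw [hfun]; exact hηsum
  rw [hη.deriv]
  -- identify the derivative with matrix expression
  have hS : (∑ i, ∑ j, (gd i * (A i j * g₀ j) + g₀ i * (Gd i j * g₀ j + A i j * gd j)))
      = gd ⬝ᵥ A *ᵥ g₀ + g₀ ⬝ᵥ Gd *ᵥ g₀ + g₀ ⬝ᵥ A *ᵥ gd := by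
    simp only [dotProduct, Matrix.mulVec, Finset.mul_sum,
      ← Finset.sum_add_distrib]
    exact Finset.sum_congr rfl fun i _ => Finset.sum_congr rfl fun j _ => by ring
  rw [hS]
  -- symmetry facts
  have hFsym : (F t₀)ᵀ = F t₀ := by
    have := hF₀.1
    simpa [Matrix.IsHermitian] using this
  have hAsym : Aᵀ = A := by
    rw [hA, Matrix.transpose_nonsing_inv, hFsym]
  have hHsym : Hᵀ = H := hH
  set v := A *ᵥ g₀ with hv
  have hgd' : gd = -(H *ᵥ v) := by rw [hgd, ← Matrix.mulVec_mulVec, hv]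
  have hFv : F t₀ *ᵥ v = g₀ := by
    rw [hv, Matrix.mulVec_mulVec, Matrix.mul_nonsing_inv _ hunit, Matrix.one_mulVec]
  have t1 : gd ⬝ᵥ A *ᵥ g₀ = -(v ⬝ᵥ H *ᵥ v) := by
    rw [hgd', ← hv, neg_dotProduct, dotProduct_comm]
  have t3 : g₀ ⬝ᵥ A *ᵥ gd = -(v ⬝ᵥ H *ᵥ v) := by
    rw [sym_shift hAsym, ← hv, hgd', dotProduct_neg]
  have t2 : g₀ ⬝ᵥ Gd *ᵥ g₀ = -(v ⬝ᵥ F' *ᵥ v) := by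
    rw [hGdEq, Matrix.neg_mulVec, dotProduct_neg, Matrix.mulVec_mulVec,
      ← Matrix.mul_assoc, Matrix.mul_assoc, ← Matrix.mulVec_mulVec,
      sym_shift hAsym, ← hv]
  have hη₀ : g₀ ⬝ᵥ A *ᵥ g₀ = v ⬝ᵥ F t₀ *ᵥ v := by
    rw [← hv, hFv, dotProduct_comm]
  have hL := hLoewner.dotProduct_mulVec_nonneg v
  simp only [star_trivial, Matrix.sub_mulVec, Matrix.smul_mulVec,
    dotProduct_sub, dotProduct_smul, smul_eq_mul] at hL
  rw [t1, t2, t3, hη₀]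
  linarith
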